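/- Let m < −5/2, let a₁, a₂, a₃ ∈ S^m(ℝ) and a(η) = a₁(η₁)a₂(η₂)a₃(η₃), and let b : ℝ³ → ℂ be measurable with ‖b‖ < ∞. Fix 0 < α < β and 0 < δ < min(1, α). Then there exists C > 0 such that for all ξ ∈ ℝ with |ξ| > 1 and all κ₂, κ₃ ∈ [α, β]: | ∫_{A_{GGG}(ξ,κ₂,κ₃)} ( a(ξθ−η) − a(ξθ) ) b(η) dη | ≤ C |ξ|^{3m−1}. -/

import Mathlib

open MeasureTheory

/-- The Japanese bracket `⟨t⟩ = (1+t²)^{1/2}`. -/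
noncomputable def jb (t : ℝ) : ℝ := Real.sqrt (1 + t ^ 2)

/-- The symbol class `S^m(ℝ)`. -/
def SymbolClass (m : ℝ) (a : ℝ → ℂ) : Prop :=
  ContDiff ℝ (⊤ : ℕ∞) a ∧
    ∀ k : ℕ, ∃ C : ℝ, 0 < C ∧ ∀ t : ℝ, ‖iteratedDeriv k a t‖ ≤ C * jb t ^ (m - (k : ℝ))

/-- `a(η) = a₁(η₁)a₂(η₂)a₃(η₃)`. -/
noncomputable def aprod (a₁ a₂ a₃ : ℝ → ℂ) (η : Fin 3 → ℝ) : ℂ :=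
  a₁ (η 0) * a₂ (η 1) * a₃ (η 2)

/-- `ξθ = (ξ, κ₂ξ, κ₃ξ)`. -/
def xitheta (ξ κ₂ κ₃ : ℝ) : Fin 3 → ℝ := ![ξ, κ₂ * ξ, κ₃ * ξ]

/-- `A_{GGG}(ξ,κ₂,κ₃) = {η : |η₁−ξ| ≥ δ|ξ|, |η₂−κ₂ξ| ≥ δ|ξ|, |η₃−κ₃ξ| ≥ δ|ξ|}`. -/
def A_GGG (δ ξ κ₂ κ₃ : ℝ) : Set (Fin 3 → ℝ) :=
  {η | δ * |ξ| ≤ |η 0 - ξ| ∧ δ * |ξ| ≤ |η 1 - κ₂ * ξ| ∧ δ * |ξ| ≤ |η 2 - κ₃ * ξ|}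

/-- `‖b‖² = ∫ ⟨η₁⟩^{−2m−1}⟨η₂⟩^{−2m−1}⟨η₃⟩^{−2m−1}|b(η)|² dη` as an `ℝ≥0∞`-valued integral. -/
noncomputable def bNormSq (m : ℝ) (b : (Fin 3 → ℝ) → ℂ) : ENNReal :=
  ∫⁻ η : Fin 3 → ℝ, ENNReal.ofReal
    (jb (η 0) ^ (-2 * m - 1) * jb (η 1) ^ (-2 * m - 1) * jb (η 2) ^ (-2 * m - 1) * ‖b η‖ ^ 2)

lemma jb_pos (t : ℝ) : 0 < jb t := Real.sqrt_pos.2 (by positivity)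

lemma one_le_jb (t : ℝ) : 1 ≤ jb t := by
  have := Real.sqrt_le_sqrt (show (1:ℝ) ≤ 1 + t ^ 2 by nlinarith [sq_nonneg t])
  rwa [Real.sqrt_one] at this

lemma abs_le_jb (t : ℝ) : |t| ≤ jb t := by
  have := Real.sqrt_le_sqrt (show t ^ 2 ≤ 1 + t ^ 2 by linarith)
  rwa [Real.sqrt_sq_eq_abs] at this

lemma jb_continuous : Continuous jb := by
  unfold jb
  exact Real.continuous_sqrt.comp (by continuity)

lemma one_add_abs_div_le_jb (t : ℝ) : (1 + |t|) / Real.sqrt 2 ≤ jb t := by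
  rw [div_le_iff₀ (by positivity)]
  have h2 : jb t * Real.sqrt 2 = Real.sqrt ((1 + t ^ 2) * 2) := by
    rw [jb, ← Real.sqrt_mul (by positivity)]
  rw [h2]
  rw [show (1:ℝ) + |t| = Real.sqrt ((1 + |t|) ^ 2) from (Real.sqrt_sq (by positivity)).symm]
  apply Real.sqrt_le_sqrt
  have := sq_nonneg (|t| - 1)
  have := sq_abs t
  nlinarith [abs_nonneg t]

lemma jb_rpow_le {r t m : ℝ} (hm : m ≤ 0) (hr : 0 < r) (h : r ≤ jb t) : jb t ^ m ≤ r ^ m :=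
  Real.rpow_le_rpow_of_nonpos hr h hm

lemma SymbolClass.bound0 {m : ℝ} {a : ℝ → ℂ} (h : SymbolClass m a) :
    ∃ C : ℝ, 0 < C ∧ ∀ t, ‖a t‖ ≤ C * jb t ^ m := by
  obtain ⟨C, hC, hB⟩ := h.2 0
  exact ⟨C, hC, fun t => by simpa [iteratedDeriv_zero] using hB t⟩

lemma SymbolClass.bound1 {m : ℝ} {a : ℝ → ℂ} (h : SymbolClass m a) :
    ∃ C : ℝ, 0 < C ∧ ∀ t, ‖deriv a t‖ ≤ C * jb t ^ (m - 1) := by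
  obtain ⟨C, hC, hB⟩ := h.2 1
  exact ⟨C, hC, fun t => by simpa [iteratedDeriv_one] using hB t⟩

lemma mul_le_mul₃ {p q s P Q S : ℝ} (h1 : p ≤ P) (h2 : q ≤ Q) (h3 : s ≤ S)
    (hp : 0 ≤ p) (hq : 0 ≤ q) (hs : 0 ≤ s) : p * q * s ≤ P * Q * S :=
  mul_le_mul (mul_le_mul h1 h2 hq (hp.trans h1)) h3 hs
    (mul_nonneg (hp.trans h1) (hq.trans h2))

lemma amgm {u v x y : ℝ} (hu : 0 < u) (hv : 0 < v) (huv : u * v = 1)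
    (hx : 0 ≤ x) (hy : 0 ≤ y) : x * y ≤ (x ^ 2 * u + v * y ^ 2) / 2 := by
  nlinarith [mul_nonneg (sq_nonneg (x * u - y)) hv.le]
lemma symbol_prod_diff_bound {m : ℝ} (hm1 : m ≤ 0) {a₁ a₂ a₃ : ℝ → ℂ}
    (hd₁ : Differentiable ℝ a₁) (hd₂ : Differentiable ℝ a₂) (hd₃ : Differentiable ℝ a₃)
    {C₁ C₂ C₃ D₁ D₂ D₃ : ℝ}
    (hC₁ : ∀ t, ‖a₁ t‖ ≤ C₁ * jb t ^ m) (hC₂ : ∀ t, ‖a₂ t‖ ≤ C₂ * jb t ^ m)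
    (hC₃ : ∀ t, ‖a₃ t‖ ≤ C₃ * jb t ^ m)
    (hD₁ : ∀ t, ‖deriv a₁ t‖ ≤ D₁ * jb t ^ (m - 1))
    (hD₂ : ∀ t, ‖deriv a₂ t‖ ≤ D₂ * jb t ^ (m - 1))
    (hD₃ : ∀ t, ‖deriv a₃ t‖ ≤ D₃ * jb t ^ (m - 1))
    (hC₁0 : 0 ≤ C₁) (hC₂0 : 0 ≤ C₂) (hC₃0 : 0 ≤ C₃)
    (hD₁0 : 0 ≤ D₁) (hD₂0 : 0 ≤ D₂) (hD₃0 : 0 ≤ D₃)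
    {x₀ x₁ x₂ y₀ y₁ y₂ r : ℝ} (hr : 0 < r)
    (hseg : ∀ t ∈ Set.Icc (0:ℝ) 1,
      r ≤ jb (x₀ - t * y₀) ∧ r ≤ jb (x₁ - t * y₁) ∧ r ≤ jb (x₂ - t * y₂)) :
    ‖a₁ (x₀ - y₀) * a₂ (x₁ - y₁) * a₃ (x₂ - y₂) - a₁ x₀ * a₂ x₁ * a₃ x₂‖ ≤
      (D₁ * C₂ * C₃ + C₁ * D₂ * C₃ + C₁ * C₂ * D₃) * (|y₀| + |y₁| + |y₂|)
        * r ^ (3 * m - 1) := by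
  have hin : ∀ (x y t : ℝ), HasDerivAt (fun s : ℝ => x - s * y) (-y) t := by
    intro x y t
    exact ((hasDerivAt_const t x).sub ((hasDerivAt_id t).mul_const y)).congr_deriv (by simp)
  have hg : ∀ (a : ℝ → ℂ), Differentiable ℝ a → ∀ (x y t : ℝ),
      HasDerivAt (fun s => a (x - s * y)) ((-y) • deriv a (x - t * y)) t := by
    intro a ha x y t
    exact ((ha (x - t * y)).hasDerivAt).scomp t (hin x y t)
  set d₁ : ℝ → ℂ := fun t => (-y₀) • deriv a₁ (x₀ - t * y₀) with hd₁def
  set d₂ : ℝ → ℂ := fun t => (-y₁) • deriv a₂ (x₁ - t * y₁) with hd₂def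
  set d₃ : ℝ → ℂ := fun t => (-y₂) • deriv a₃ (x₂ - t * y₂) with hd₃def
  have hf : ∀ t : ℝ, HasDerivAt
      (fun s => a₁ (x₀ - s * y₀) * a₂ (x₁ - s * y₁) * a₃ (x₂ - s * y₂))
      ((d₁ t * a₂ (x₁ - t * y₁) + a₁ (x₀ - t * y₀) * d₂ t) * a₃ (x₂ - t * y₂)
        + a₁ (x₀ - t * y₀) * a₂ (x₁ - t * y₁) * d₃ t) t := fun t =>
    ((hg a₁ hd₁ x₀ y₀ t).mul (hg a₂ hd₂ x₁ y₁ t)).mul (hg a₃ hd₃ x₂ y₂ t)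
  have hpow : r ^ (m - 1) * r ^ m * r ^ m = r ^ (3 * m - 1) := by
    rw [← Real.rpow_add hr, ← Real.rpow_add hr]
    congr 1; ring
  set Sy : ℝ := |y₀| + |y₁| + |y₂| with hSy
  have hS0 : 0 ≤ Sy := by positivity
  have bound : ∀ t ∈ Set.Ico (0:ℝ) 1,
      ‖(d₁ t * a₂ (x₁ - t * y₁) + a₁ (x₀ - t * y₀) * d₂ t) * a₃ (x₂ - t * y₂)
        + a₁ (x₀ - t * y₀) * a₂ (x₁ - t * y₁) * d₃ t‖ ≤
      (D₁ * C₂ * C₃ + C₁ * D₂ * C₃ + C₁ * C₂ * D₃) * Sy * r ^ (3 * m - 1) := by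
    intro t ht
    obtain ⟨hs₁, hs₂, hs₃⟩ := hseg t (Set.Ico_subset_Icc_self ht)
    have n₁ : ‖a₁ (x₀ - t * y₀)‖ ≤ C₁ * r ^ m :=
      (hC₁ _).trans (mul_le_mul_of_nonneg_left (jb_rpow_le hm1 hr hs₁) hC₁0)
    have n₂ : ‖a₂ (x₁ - t * y₁)‖ ≤ C₂ * r ^ m :=
      (hC₂ _).trans (mul_le_mul_of_nonneg_left (jb_rpow_le hm1 hr hs₂) hC₂0)
    have n₃ : ‖a₃ (x₂ - t * y₂)‖ ≤ C₃ * r ^ m :=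
      (hC₃ _).trans (mul_le_mul_of_nonneg_left (jb_rpow_le hm1 hr hs₃) hC₃0)
    have hm1' : m - 1 ≤ 0 := by linarith
    have e₁ : ‖d₁ t‖ ≤ Sy * (D₁ * r ^ (m - 1)) := by
      rw [hd₁def]
      simp only [norm_smul, Real.norm_eq_abs, abs_neg]
      have h1 : ‖deriv a₁ (x₀ - t * y₀)‖ ≤ D₁ * r ^ (m - 1) :=
        (hD₁ _).trans (mul_le_mul_of_nonneg_left (jb_rpow_le hm1' hr hs₁) hD₁0)
      have h2 : |y₀| ≤ Sy := by rw [hSy]; linarith [abs_nonneg y₀, abs_nonneg y₁, abs_nonneg y₂]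
      exact mul_le_mul h2 h1 (norm_nonneg _) hS0
    have e₂ : ‖d₂ t‖ ≤ Sy * (D₂ * r ^ (m - 1)) := by
      rw [hd₂def]
      simp only [norm_smul, Real.norm_eq_abs, abs_neg]
      have h1 : ‖deriv a₂ (x₁ - t * y₁)‖ ≤ D₂ * r ^ (m - 1) :=
        (hD₂ _).trans (mul_le_mul_of_nonneg_left (jb_rpow_le hm1' hr hs₂) hD₂0)
      have h2 : |y₁| ≤ Sy := by rw [hSy]; linarith [abs_nonneg y₀, abs_nonneg y₁, abs_nonneg y₂]
      exact mul_le_mul h2 h1 (norm_nonneg _) hS0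
    have e₃ : ‖d₃ t‖ ≤ Sy * (D₃ * r ^ (m - 1)) := by
      rw [hd₃def]
      simp only [norm_smul, Real.norm_eq_abs, abs_neg]
      have h1 : ‖deriv a₃ (x₂ - t * y₂)‖ ≤ D₃ * r ^ (m - 1) :=
        (hD₃ _).trans (mul_le_mul_of_nonneg_left (jb_rpow_le hm1' hr hs₃) hD₃0)
      have h2 : |y₂| ≤ Sy := by rw [hSy]; linarith [abs_nonneg y₀, abs_nonneg y₁, abs_nonneg y₂]
      exact mul_le_mul h2 h1 (norm_nonneg _) hS0
    have t1 : ‖d₁ t‖ * ‖a₂ (x₁ - t * y₁)‖ * ‖a₃ (x₂ - t * y₂)‖ ≤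
        D₁ * C₂ * C₃ * Sy * r ^ (3 * m - 1) := by
      have := mul_le_mul₃ e₁ n₂ n₃ (norm_nonneg _) (norm_nonneg _) (norm_nonneg _)
      calc ‖d₁ t‖ * ‖a₂ (x₁ - t * y₁)‖ * ‖a₃ (x₂ - t * y₂)‖
          ≤ Sy * (D₁ * r ^ (m - 1)) * (C₂ * r ^ m) * (C₃ * r ^ m) := this
        _ = D₁ * C₂ * C₃ * Sy * (r ^ (m - 1) * r ^ m * r ^ m) := by ring
        _ = D₁ * C₂ * C₃ * Sy * r ^ (3 * m - 1) := by rw [hpow]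
    have t2 : ‖a₁ (x₀ - t * y₀)‖ * ‖d₂ t‖ * ‖a₃ (x₂ - t * y₂)‖ ≤
        C₁ * D₂ * C₃ * Sy * r ^ (3 * m - 1) := by
      have := mul_le_mul₃ n₁ e₂ n₃ (norm_nonneg _) (norm_nonneg _) (norm_nonneg _)
      calc ‖a₁ (x₀ - t * y₀)‖ * ‖d₂ t‖ * ‖a₃ (x₂ - t * y₂)‖
          ≤ C₁ * r ^ m * (Sy * (D₂ * r ^ (m - 1))) * (C₃ * r ^ m) := this
        _ = C₁ * D₂ * C₃ * Sy * (r ^ (m - 1) * r ^ m * r ^ m) := by ring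
        _ = C₁ * D₂ * C₃ * Sy * r ^ (3 * m - 1) := by rw [hpow]
    have t3 : ‖a₁ (x₀ - t * y₀)‖ * ‖a₂ (x₁ - t * y₁)‖ * ‖d₃ t‖ ≤
        C₁ * C₂ * D₃ * Sy * r ^ (3 * m - 1) := by
      have := mul_le_mul₃ n₁ n₂ e₃ (norm_nonneg _) (norm_nonneg _) (norm_nonneg _)
      calc ‖a₁ (x₀ - t * y₀)‖ * ‖a₂ (x₁ - t * y₁)‖ * ‖d₃ t‖
          ≤ C₁ * r ^ m * (C₂ * r ^ m) * (Sy * (D₃ * r ^ (m - 1))) := this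
        _ = C₁ * C₂ * D₃ * Sy * (r ^ (m - 1) * r ^ m * r ^ m) := by ring
        _ = C₁ * C₂ * D₃ * Sy * r ^ (3 * m - 1) := by rw [hpow]
    calc ‖(d₁ t * a₂ (x₁ - t * y₁) + a₁ (x₀ - t * y₀) * d₂ t) * a₃ (x₂ - t * y₂)
          + a₁ (x₀ - t * y₀) * a₂ (x₁ - t * y₁) * d₃ t‖
        ≤ ‖(d₁ t * a₂ (x₁ - t * y₁) + a₁ (x₀ - t * y₀) * d₂ t) * a₃ (x₂ - t * y₂)‖
          + ‖a₁ (x₀ - t * y₀) * a₂ (x₁ - t * y₁) * d₃ t‖ := norm_add_le _ _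
      _ ≤ (‖d₁ t * a₂ (x₁ - t * y₁)‖ + ‖a₁ (x₀ - t * y₀) * d₂ t‖) * ‖a₃ (x₂ - t * y₂)‖
          + ‖a₁ (x₀ - t * y₀) * a₂ (x₁ - t * y₁) * d₃ t‖ := by
          refine add_le_add ?_ le_rfl
          rw [norm_mul]
          exact mul_le_mul_of_nonneg_right (norm_add_le _ _) (norm_nonneg _)
      _ = ‖d₁ t‖ * ‖a₂ (x₁ - t * y₁)‖ * ‖a₃ (x₂ - t * y₂)‖
          + ‖a₁ (x₀ - t * y₀)‖ * ‖d₂ t‖ * ‖a₃ (x₂ - t * y₂)‖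
          + ‖a₁ (x₀ - t * y₀)‖ * ‖a₂ (x₁ - t * y₁)‖ * ‖d₃ t‖ := by
          simp only [norm_mul]; ring
      _ ≤ D₁ * C₂ * C₃ * Sy * r ^ (3 * m - 1) + C₁ * D₂ * C₃ * Sy * r ^ (3 * m - 1)
          + C₁ * C₂ * D₃ * Sy * r ^ (3 * m - 1) := by linarith
      _ = (D₁ * C₂ * C₃ + C₁ * D₂ * C₃ + C₁ * C₂ * D₃) * Sy * r ^ (3 * m - 1) := by ring
  have key := norm_image_sub_le_of_norm_deriv_le_segment_01'
    (f := fun s => a₁ (x₀ - s * y₀) * a₂ (x₁ - s * y₁) * a₃ (x₂ - s * y₂))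
    (f' := fun t => (d₁ t * a₂ (x₁ - t * y₁) + a₁ (x₀ - t * y₀) * d₂ t) * a₃ (x₂ - t * y₂)
        + a₁ (x₀ - t * y₀) * a₂ (x₁ - t * y₁) * d₃ t)
    (fun t _ => (hf t).hasDerivWithinAt) bound
  simpa using key
lemma one_dim_bound {m : ℝ} (hm : m < -5/2) (t : ℝ) :
    (1 + |t|) ^ 2 * jb t ^ (2 * m + 1) ≤
      Real.sqrt 2 ^ (-(2 * m + 1)) * (1 + |t|) ^ (2 * m + 3) := by
  have h0 : (0:ℝ) < 1 + |t| := by positivity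
  have hexp : 2 * m + 1 ≤ 0 := by linarith
  have h1 : jb t ^ (2 * m + 1) ≤ ((1 + |t|) / Real.sqrt 2) ^ (2 * m + 1) :=
    Real.rpow_le_rpow_of_nonpos (by positivity) (one_add_abs_div_le_jb t) hexp
  have h2 : ((1 + |t|) / Real.sqrt 2) ^ (2 * m + 1) =
      Real.sqrt 2 ^ (-(2 * m + 1)) * (1 + |t|) ^ (2 * m + 1) := by
    rw [Real.div_rpow h0.le (Real.sqrt_nonneg 2), Real.rpow_neg (Real.sqrt_nonneg 2)]
    ring
  have h3 : (1 + |t|) ^ (2:ℕ) * (1 + |t|) ^ (2 * m + 1) = (1 + |t|) ^ (2 * m + 3) := by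
    rw [← Real.rpow_natCast (1 + |t|) 2, ← Real.rpow_add h0,
      show ((2:ℕ):ℝ) + (2 * m + 1) = 2 * m + 3 by push_cast; ring]
  calc (1 + |t|) ^ 2 * jb t ^ (2 * m + 1)
      ≤ (1 + |t|) ^ 2 * (Real.sqrt 2 ^ (-(2 * m + 1)) * (1 + |t|) ^ (2 * m + 1)) :=
        mul_le_mul_of_nonneg_left (h1.trans_eq h2) (by positivity)
    _ = Real.sqrt 2 ^ (-(2 * m + 1)) * ((1 + |t|) ^ (2:ℕ) * (1 + |t|) ^ (2 * m + 1)) := by ring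
    _ = Real.sqrt 2 ^ (-(2 * m + 1)) * (1 + |t|) ^ (2 * m + 3) := by rw [h3]

lemma weight_prod_integrable {m : ℝ} (hm : m < -5/2) :
    Integrable (fun η : Fin 3 → ℝ => ∏ i : Fin 3, (1 + |η i|) ^ (2 * m + 3)) := by
  have base : Integrable (fun t : ℝ => (1 + |t|) ^ (2 * m + 3)) := by
    have h := integrable_one_add_norm (E := ℝ) (μ := volume) (r := -(2 * m + 3))
      (by simp only [Module.finrank_self, Nat.cast_one]; linarith)
    simpa using h
  exact Integrable.fin_nat_prod (f := fun _ t => (1 + |t|) ^ (2 * m + 3)) (fun _ => base)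

lemma h_integrable {m : ℝ} (hm : m < -5/2) {b : (Fin 3 → ℝ) → ℂ} (hb : Measurable b)
    (hbnorm : bNormSq m b < ⊤) :
    Integrable (fun η : Fin 3 → ℝ => (1 + |η 0| + |η 1| + |η 2|) * ‖b η‖) := by
  have happ : ∀ i : Fin 3, Continuous (fun η : Fin 3 → ℝ => η i) := fun i => continuous_apply i
  have hjbrc : ∀ (c : ℝ), Continuous (fun t : ℝ => jb t ^ c) := fun c =>
    jb_continuous.rpow_const (fun x => Or.inl (jb_pos x).ne')
  set u : (Fin 3 → ℝ) → ℝ :=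
    fun η => jb (η 0) ^ (2 * m + 1) * jb (η 1) ^ (2 * m + 1) * jb (η 2) ^ (2 * m + 1) with hu
  set v : (Fin 3 → ℝ) → ℝ :=
    fun η => jb (η 0) ^ (-2 * m - 1) * jb (η 1) ^ (-2 * m - 1) * jb (η 2) ^ (-2 * m - 1) with hv
  set x : (Fin 3 → ℝ) → ℝ := fun η => 1 + |η 0| + |η 1| + |η 2| with hx
  have hucont : Continuous u :=
    (((hjbrc _).comp (happ 0)).mul ((hjbrc _).comp (happ 1))).mul ((hjbrc _).comp (happ 2))
  have hvcont : Continuous v :=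
    (((hjbrc _).comp (happ 0)).mul ((hjbrc _).comp (happ 1))).mul ((hjbrc _).comp (happ 2))
  have hxcont : Continuous x :=
    ((continuous_const.add (happ 0).abs).add (happ 1).abs).add (happ 2).abs
  have hupos : ∀ η, 0 < u η := fun η =>
    mul_pos (mul_pos (Real.rpow_pos_of_pos (jb_pos _) _) (Real.rpow_pos_of_pos (jb_pos _) _))
      (Real.rpow_pos_of_pos (jb_pos _) _)
  have hvpos : ∀ η, 0 < v η := fun η =>
    mul_pos (mul_pos (Real.rpow_pos_of_pos (jb_pos _) _) (Real.rpow_pos_of_pos (jb_pos _) _))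
      (Real.rpow_pos_of_pos (jb_pos _) _)
  have hxpos : ∀ η, 0 < x η := fun η => by rw [hx]; positivity
  have huv : ∀ η, u η * v η = 1 := by
    intro η
    have e : ∀ t : ℝ, jb t ^ (2 * m + 1) * jb t ^ (-2 * m - 1) = 1 := fun t => by
      rw [← Real.rpow_add (jb_pos t), show (2 * m + 1) + (-2 * m - 1) = 0 by ring,
        Real.rpow_zero]
    have : u η * v η = (jb (η 0) ^ (2 * m + 1) * jb (η 0) ^ (-2 * m - 1)) *
        (jb (η 1) ^ (2 * m + 1) * jb (η 1) ^ (-2 * m - 1)) *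
        (jb (η 2) ^ (2 * m + 1) * jb (η 2) ^ (-2 * m - 1)) := by rw [hu, hv]; ring
    rw [this, e, e, e]; norm_num
  have hφ₂ : Integrable (fun η => v η * ‖b η‖ ^ 2) := by
    constructor
    · exact ((hvcont.measurable).mul (hb.norm.pow_const 2)).aestronglyMeasurable
    · rw [hasFiniteIntegral_iff_ofReal (ae_of_all _ fun η =>
        mul_nonneg (hvpos η).le (by positivity))]
      unfold bNormSq at hbnorm
      simpa [hv] using hbnorm
  have hφ₁ : Integrable (fun η => x η ^ 2 * u η) := by
    refine Integrable.mono' ((weight_prod_integrable hm).const_mul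
      ((Real.sqrt 2 ^ (-(2 * m + 1))) ^ 3)) ?_ (ae_of_all _ fun η => ?_)
    · exact ((hxcont.pow 2).mul hucont).aestronglyMeasurable
    · rw [Real.norm_eq_abs, abs_of_nonneg (mul_nonneg (by positivity) (hupos η).le)]
      have hP : x η ≤ (1 + |η 0|) * (1 + |η 1|) * (1 + |η 2|) := by
        simp only [hx]
        nlinarith [abs_nonneg (η 0), abs_nonneg (η 1), abs_nonneg (η 2),
          mul_nonneg (abs_nonneg (η 0)) (abs_nonneg (η 1)),
          mul_nonneg (abs_nonneg (η 1)) (abs_nonneg (η 2)),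
          mul_nonneg (abs_nonneg (η 0)) (abs_nonneg (η 2)),
          mul_nonneg (mul_nonneg (abs_nonneg (η 0)) (abs_nonneg (η 1))) (abs_nonneg (η 2))]
      have hP2 : x η ^ 2 ≤ ((1 + |η 0|) * (1 + |η 1|) * (1 + |η 2|)) ^ 2 :=
        pow_le_pow_left₀ (hxpos η).le hP 2
      calc x η ^ 2 * u η ≤ ((1 + |η 0|) * (1 + |η 1|) * (1 + |η 2|)) ^ 2 * u η :=
            mul_le_mul_of_nonneg_right hP2 (hupos η).le
        _ = ((1 + |η 0|) ^ 2 * jb (η 0) ^ (2 * m + 1)) *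
            ((1 + |η 1|) ^ 2 * jb (η 1) ^ (2 * m + 1)) *
            ((1 + |η 2|) ^ 2 * jb (η 2) ^ (2 * m + 1)) := by rw [hu]; ring
        _ ≤ (Real.sqrt 2 ^ (-(2 * m + 1)) * (1 + |η 0|) ^ (2 * m + 3)) *
            (Real.sqrt 2 ^ (-(2 * m + 1)) * (1 + |η 1|) ^ (2 * m + 3)) *
            (Real.sqrt 2 ^ (-(2 * m + 1)) * (1 + |η 2|) ^ (2 * m + 3)) := by
            refine mul_le_mul₃ (one_dim_bound hm _) (one_dim_bound hm _) (one_dim_bound hm _)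
              ?_ ?_ ?_ <;>
              exact mul_nonneg (by positivity) (Real.rpow_pos_of_pos (jb_pos _) _).le
        _ = (Real.sqrt 2 ^ (-(2 * m + 1))) ^ 3 * ∏ i : Fin 3, (1 + |η i|) ^ (2 * m + 3) := by
            rw [Fin.prod_univ_three]; ring
  refine Integrable.mono' ((hφ₁.add hφ₂).div_const 2) ?_ (ae_of_all _ fun η => ?_)
  · exact ((hxcont.measurable).mul hb.norm).aestronglyMeasurable
  · rw [Real.norm_eq_abs, abs_of_nonneg (mul_nonneg (hxpos η).le (norm_nonneg _))]
    exact amgm (hupos η) (hvpos η) (huv η) (hxpos η).le (norm_nonneg _)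

lemma A_GGG_measurable (δ ξ κ₂ κ₃ : ℝ) : MeasurableSet (A_GGG δ ξ κ₂ κ₃) := by
  have h0 : MeasurableSet {η : Fin 3 → ℝ | δ * |ξ| ≤ |η 0 - ξ|} :=
    measurableSet_le measurable_const ((measurable_pi_apply 0).sub measurable_const).abs
  have h1 : MeasurableSet {η : Fin 3 → ℝ | δ * |ξ| ≤ |η 1 - κ₂ * ξ|} :=
    measurableSet_le measurable_const ((measurable_pi_apply 1).sub measurable_const).abs
  have h2 : MeasurableSet {η : Fin 3 → ℝ | δ * |ξ| ≤ |η 2 - κ₃ * ξ|} :=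
    measurableSet_le measurable_const ((measurable_pi_apply 2).sub measurable_const).abs
  exact h0.inter (h1.inter h2)

set_option maxHeartbeats 1600000 in
theorem stmt8 (m : ℝ) (hm : m < -5 / 2) (a₁ a₂ a₃ : ℝ → ℂ)
    (h₁ : SymbolClass m a₁) (h₂ : SymbolClass m a₂) (h₃ : SymbolClass m a₃)
    (b : (Fin 3 → ℝ) → ℂ) (hb : Measurable b) (hbnorm : bNormSq m b < ⊤)
    (α β δ : ℝ) (hα : 0 < α) (hαβ : α < β) (hδ : 0 < δ) (hδ1 : δ < min 1 α) :
    ∃ C : ℝ, 0 < C ∧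
      ∀ ξ : ℝ, 1 < |ξ| → ∀ κ₂ ∈ Set.Icc α β, ∀ κ₃ ∈ Set.Icc α β,
        ‖∫ η in A_GGG δ ξ κ₂ κ₃,
            (aprod a₁ a₂ a₃ (xitheta ξ κ₂ κ₃ - η) - aprod a₁ a₂ a₃ (xitheta ξ κ₂ κ₃)) * b η‖
          ≤ C * |ξ| ^ (3 * m - 1) := by
  have hm0 : m ≤ 0 := by linarith
  obtain ⟨C₁, hC₁p, hC₁⟩ := h₁.bound0
  obtain ⟨C₂, hC₂p, hC₂⟩ := h₂.bound0
  obtain ⟨C₃, hC₃p, hC₃⟩ := h₃.bound0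
  obtain ⟨D₁, hD₁p, hD₁⟩ := h₁.bound1
  obtain ⟨D₂, hD₂p, hD₂⟩ := h₂.bound1
  obtain ⟨D₃, hD₃p, hD₃⟩ := h₃.bound1
  have hd₁ : Differentiable ℝ a₁ := h₁.1.differentiable (by simp)
  have hd₂ : Differentiable ℝ a₂ := h₂.1.differentiable (by simp)
  have hd₃ : Differentiable ℝ a₃ := h₃.1.differentiable (by simp)
  set γ : ℝ := min 1 α with hγdef
  have hγ : 0 < γ := lt_min one_pos hα
  have hγ1 : γ ≤ 1 := min_le_left _ _
  have hγα : γ ≤ α := min_le_right _ _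
  set c : ℝ := γ / 2 with hcdef
  have hc : 0 < c := by positivity
  have hc1 : c ≤ 1 / 2 := by rw [hcdef]; linarith
  have hcα : c ≤ α / 2 := by rw [hcdef]; linarith
  set K₁ : ℝ := C₁ * C₂ * C₃ * (δ ^ (3 * m) + γ ^ (3 * m)) with hK₁def
  have hK₁ : 0 < K₁ := by
    have := Real.rpow_pos_of_pos hδ (3 * m)
    have := Real.rpow_pos_of_pos hγ (3 * m)
    rw [hK₁def]; positivity
  set D : ℝ := D₁ * C₂ * C₃ + C₁ * D₂ * C₃ + C₁ * C₂ * D₃ with hDdef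
  have hD : 0 < D := by rw [hDdef]; positivity
  have hcc : 0 < c ^ (3 * m - 1) := Real.rpow_pos_of_pos hc _
  set K : ℝ := K₁ / c + D * c ^ (3 * m - 1) with hKdef
  have hK : 0 < K := by rw [hKdef]; positivity
  have hbint := h_integrable hm hb hbnorm
  set I : ℝ := ∫ η : Fin 3 → ℝ, (1 + |η 0| + |η 1| + |η 2|) * ‖b η‖ with hIdef
  have hI : 0 ≤ I := integral_nonneg fun η => mul_nonneg (by positivity) (norm_nonneg _)
  refine ⟨K * (I + 1), by positivity, ?_⟩
  intro ξ hξ κ₂ hκ₂ κ₃ hκ₃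
  have hξ0 : 0 < |ξ| := lt_trans one_pos hξ
  have hR : 0 < |ξ| ^ (3 * m - 1) := Real.rpow_pos_of_pos hξ0 _
  have hpow3 : ∀ r : ℝ, 0 < r → r ^ m * r ^ m * r ^ m = r ^ (3 * m) := fun r hr => by
    rw [← Real.rpow_add hr, ← Real.rpow_add hr]; congr 1; ring
  have key : ∀ η ∈ A_GGG δ ξ κ₂ κ₃,
      ‖(aprod a₁ a₂ a₃ (xitheta ξ κ₂ κ₃ - η) - aprod a₁ a₂ a₃ (xitheta ξ κ₂ κ₃)) * b η‖ ≤
      K * |ξ| ^ (3 * m - 1) * ((1 + |η 0| + |η 1| + |η 2|) * ‖b η‖) := by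
    intro η hη
    obtain ⟨hA1, hA2, hA3⟩ := hη
    rw [norm_mul]
    have hS0 : (0:ℝ) ≤ |η 0| + |η 1| + |η 2| := by positivity
    have hS0' : (0:ℝ) < 1 + |η 0| + |η 1| + |η 2| := by positivity
    have main : ‖aprod a₁ a₂ a₃ (xitheta ξ κ₂ κ₃ - η) - aprod a₁ a₂ a₃ (xitheta ξ κ₂ κ₃)‖ ≤
        K * |ξ| ^ (3 * m - 1) * (1 + |η 0| + |η 1| + |η 2|) := by
      have haprod1 : aprod a₁ a₂ a₃ (xitheta ξ κ₂ κ₃ - η) =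
          a₁ (ξ - η 0) * a₂ (κ₂ * ξ - η 1) * a₃ (κ₃ * ξ - η 2) := rfl
      have haprod2 : aprod a₁ a₂ a₃ (xitheta ξ κ₂ κ₃) =
          a₁ ξ * a₂ (κ₂ * ξ) * a₃ (κ₃ * ξ) := rfl
      rw [haprod1, haprod2]
      by_cases hbig : c * |ξ| ≤ |η 0| ∨ c * |ξ| ≤ |η 1| ∨ c * |ξ| ≤ |η 2|
      · -- far region: both terms are O(|ξ|^{3m}) and |ξ| ≲ 1 + Σ|ηᵢ|
        have hcS : c * |ξ| ≤ 1 + |η 0| + |η 1| + |η 2| := by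
          rcases hbig with h | h | h <;>
            linarith [abs_nonneg (η 0), abs_nonneg (η 1), abs_nonneg (η 2)]
        have hδξ : 0 < δ * |ξ| := by positivity
        have hγξ : 0 < γ * |ξ| := by positivity
        have j1 : ‖a₁ (ξ - η 0)‖ ≤ C₁ * (δ * |ξ|) ^ m := by
          refine (hC₁ _).trans (mul_le_mul_of_nonneg_left
            (jb_rpow_le hm0 hδξ (le_trans ?_ (abs_le_jb _))) hC₁p.le)
          rw [abs_sub_comm]; exact hA1
        have j2 : ‖a₂ (κ₂ * ξ - η 1)‖ ≤ C₂ * (δ * |ξ|) ^ m := by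
          refine (hC₂ _).trans (mul_le_mul_of_nonneg_left
            (jb_rpow_le hm0 hδξ (le_trans ?_ (abs_le_jb _))) hC₂p.le)
          rw [abs_sub_comm]; exact hA2
        have j3 : ‖a₃ (κ₃ * ξ - η 2)‖ ≤ C₃ * (δ * |ξ|) ^ m := by
          refine (hC₃ _).trans (mul_le_mul_of_nonneg_left
            (jb_rpow_le hm0 hδξ (le_trans ?_ (abs_le_jb _))) hC₃p.le)
          rw [abs_sub_comm]; exact hA3
        have k1 : ‖a₁ ξ‖ ≤ C₁ * (γ * |ξ|) ^ m := by
          refine (hC₁ _).trans (mul_le_mul_of_nonneg_left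
            (jb_rpow_le hm0 hγξ (le_trans ?_ (abs_le_jb _))) hC₁p.le)
          have := mul_le_mul_of_nonneg_right hγ1 (abs_nonneg ξ)
          linarith
        have k2 : ‖a₂ (κ₂ * ξ)‖ ≤ C₂ * (γ * |ξ|) ^ m := by
          refine (hC₂ _).trans (mul_le_mul_of_nonneg_left
            (jb_rpow_le hm0 hγξ (le_trans ?_ (abs_le_jb _))) hC₂p.le)
          rw [abs_mul, abs_of_nonneg (le_trans hα.le hκ₂.1)]
          have h5 := mul_le_mul_of_nonneg_right (le_trans hγα hκ₂.1) (abs_nonneg ξ)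
          linarith
        have k3 : ‖a₃ (κ₃ * ξ)‖ ≤ C₃ * (γ * |ξ|) ^ m := by
          refine (hC₃ _).trans (mul_le_mul_of_nonneg_left
            (jb_rpow_le hm0 hγξ (le_trans ?_ (abs_le_jb _))) hC₃p.le)
          rw [abs_mul, abs_of_nonneg (le_trans hα.le hκ₃.1)]
          have h5 := mul_le_mul_of_nonneg_right (le_trans hγα hκ₃.1) (abs_nonneg ξ)
          linarith
        have pb1 : ‖a₁ (ξ - η 0) * a₂ (κ₂ * ξ - η 1) * a₃ (κ₃ * ξ - η 2)‖ ≤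
            C₁ * C₂ * C₃ * (δ ^ (3 * m) * |ξ| ^ (3 * m)) := by
          rw [norm_mul, norm_mul]
          calc ‖a₁ (ξ - η 0)‖ * ‖a₂ (κ₂ * ξ - η 1)‖ * ‖a₃ (κ₃ * ξ - η 2)‖
              ≤ (C₁ * (δ * |ξ|) ^ m) * (C₂ * (δ * |ξ|) ^ m) * (C₃ * (δ * |ξ|) ^ m) :=
                mul_le_mul₃ j1 j2 j3 (norm_nonneg _) (norm_nonneg _) (norm_nonneg _)
            _ = C₁ * C₂ * C₃ * ((δ * |ξ|) ^ m * (δ * |ξ|) ^ m * (δ * |ξ|) ^ m) := by ring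
            _ = C₁ * C₂ * C₃ * (δ * |ξ|) ^ (3 * m) := by rw [hpow3 _ hδξ]
            _ = C₁ * C₂ * C₃ * (δ ^ (3 * m) * |ξ| ^ (3 * m)) := by
                rw [Real.mul_rpow hδ.le (abs_nonneg ξ)]
        have pb2 : ‖a₁ ξ * a₂ (κ₂ * ξ) * a₃ (κ₃ * ξ)‖ ≤
            C₁ * C₂ * C₃ * (γ ^ (3 * m) * |ξ| ^ (3 * m)) := by
          rw [norm_mul, norm_mul]
          calc ‖a₁ ξ‖ * ‖a₂ (κ₂ * ξ)‖ * ‖a₃ (κ₃ * ξ)‖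
              ≤ (C₁ * (γ * |ξ|) ^ m) * (C₂ * (γ * |ξ|) ^ m) * (C₃ * (γ * |ξ|) ^ m) :=
                mul_le_mul₃ k1 k2 k3 (norm_nonneg _) (norm_nonneg _) (norm_nonneg _)
            _ = C₁ * C₂ * C₃ * ((γ * |ξ|) ^ m * (γ * |ξ|) ^ m * (γ * |ξ|) ^ m) := by ring
            _ = C₁ * C₂ * C₃ * (γ * |ξ|) ^ (3 * m) := by rw [hpow3 _ hγξ]
            _ = C₁ * C₂ * C₃ * (γ ^ (3 * m) * |ξ| ^ (3 * m)) := by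
                rw [Real.mul_rpow hγ.le (abs_nonneg ξ)]
        have hsplitpow : |ξ| ^ (3 * m) = |ξ| ^ (3 * m - 1) * |ξ| := by
          rw [show 3 * m = (3 * m - 1) + 1 by ring, Real.rpow_add hξ0, Real.rpow_one]
          norm_num
        have total : ‖a₁ (ξ - η 0) * a₂ (κ₂ * ξ - η 1) * a₃ (κ₃ * ξ - η 2) -
            a₁ ξ * a₂ (κ₂ * ξ) * a₃ (κ₃ * ξ)‖ ≤ K₁ * (|ξ| ^ (3 * m - 1) * |ξ|) := by
          rw [← hsplitpow, hK₁def]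
          exact (norm_sub_le _ _).trans ((add_le_add pb1 pb2).trans_eq (by ring))
        refine total.trans ?_
        have step : K₁ * |ξ| ≤ K₁ / c * (1 + |η 0| + |η 1| + |η 2|) := by
          rw [div_mul_eq_mul_div, le_div_iff₀ hc]
          nlinarith [mul_le_mul_of_nonneg_left hcS hK₁.le]
        calc K₁ * (|ξ| ^ (3 * m - 1) * |ξ|) = (K₁ * |ξ|) * |ξ| ^ (3 * m - 1) := by ring
          _ ≤ (K₁ / c * (1 + |η 0| + |η 1| + |η 2|)) * |ξ| ^ (3 * m - 1) :=
              mul_le_mul_of_nonneg_right step hR.le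
          _ ≤ K * |ξ| ^ (3 * m - 1) * (1 + |η 0| + |η 1| + |η 2|) := by
              rw [hKdef]
              nlinarith [mul_nonneg (mul_nonneg (mul_nonneg hD.le hcc.le) hR.le) hS0'.le]
      · -- near region: mean value theorem
        push_neg at hbig
        obtain ⟨hb0, hb1, hb2⟩ := hbig
        have hcξ : 0 < c * |ξ| := by positivity
        have hseg : ∀ t ∈ Set.Icc (0:ℝ) 1,
            c * |ξ| ≤ jb (ξ - t * η 0) ∧ c * |ξ| ≤ jb (κ₂ * ξ - t * η 1) ∧
              c * |ξ| ≤ jb (κ₃ * ξ - t * η 2) := by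
          intro t ht
          obtain ⟨ht0, ht1⟩ := ht
          have habs : ∀ y : ℝ, |t * y| ≤ |y| := fun y => by
            rw [abs_mul, abs_of_nonneg ht0]
            nlinarith [abs_nonneg y]
          refine ⟨le_trans ?_ (abs_le_jb _), le_trans ?_ (abs_le_jb _),
            le_trans ?_ (abs_le_jb _)⟩
          · have h1 := abs_sub_abs_le_abs_sub ξ (t * η 0)
            have h2 := habs (η 0)
            nlinarith [mul_nonneg (show (0:ℝ) ≤ 1 - 2 * c by linarith) hξ0.le]
          · have h1 := abs_sub_abs_le_abs_sub (κ₂ * ξ) (t * η 1)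
            have h2 := habs (η 1)
            have h3 : |κ₂ * ξ| = κ₂ * |ξ| := by
              rw [abs_mul, abs_of_nonneg (le_trans hα.le hκ₂.1)]
            have h4 : α * |ξ| ≤ κ₂ * |ξ| := mul_le_mul_of_nonneg_right hκ₂.1 hξ0.le
            nlinarith
          · have h1 := abs_sub_abs_le_abs_sub (κ₃ * ξ) (t * η 2)
            have h2 := habs (η 2)
            have h3 : |κ₃ * ξ| = κ₃ * |ξ| := by
              rw [abs_mul, abs_of_nonneg (le_trans hα.le hκ₃.1)]
            have h4 : α * |ξ| ≤ κ₃ * |ξ| := mul_le_mul_of_nonneg_right hκ₃.1 hξ0.le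
            nlinarith
        have mvt := symbol_prod_diff_bound hm0 hd₁ hd₂ hd₃ hC₁ hC₂ hC₃ hD₁ hD₂ hD₃
          hC₁p.le hC₂p.le hC₃p.le hD₁p.le hD₂p.le hD₃p.le hcξ hseg
        refine mvt.trans ?_
        rw [Real.mul_rpow hc.le (abs_nonneg ξ), ← hDdef, hKdef]
        nlinarith [mul_nonneg (mul_nonneg (div_nonneg hK₁.le hc.le) hR.le) hS0'.le,
          mul_nonneg (mul_nonneg hD.le hcc.le) hR.le]
    refine le_trans (mul_le_mul_of_nonneg_right main (norm_nonneg _)) (le_of_eq (by ring))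
  have hgint : Integrable
      (fun η : Fin 3 → ℝ => K * |ξ| ^ (3 * m - 1) * ((1 + |η 0| + |η 1| + |η 2|) * ‖b η‖)) :=
    hbint.const_mul _
  have hgnn : ∀ η : Fin 3 → ℝ,
      0 ≤ K * |ξ| ^ (3 * m - 1) * ((1 + |η 0| + |η 1| + |η 2|) * ‖b η‖) := fun η =>
    mul_nonneg (mul_nonneg hK.le hR.le) (mul_nonneg (by positivity) (norm_nonneg _))
  calc ‖∫ η in A_GGG δ ξ κ₂ κ₃,
        (aprod a₁ a₂ a₃ (xitheta ξ κ₂ κ₃ - η) - aprod a₁ a₂ a₃ (xitheta ξ κ₂ κ₃)) * b η‖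
      ≤ ∫ η in A_GGG δ ξ κ₂ κ₃,
        ‖(aprod a₁ a₂ a₃ (xitheta ξ κ₂ κ₃ - η) - aprod a₁ a₂ a₃ (xitheta ξ κ₂ κ₃)) * b η‖ :=
        norm_integral_le_integral_norm _
    _ ≤ ∫ η in A_GGG δ ξ κ₂ κ₃,
        K * |ξ| ^ (3 * m - 1) * ((1 + |η 0| + |η 1| + |η 2|) * ‖b η‖) := by
        refine integral_mono_of_nonneg (ae_of_all _ fun η => norm_nonneg _)
          hgint.integrableOn ?_
        exact (ae_restrict_iff' (A_GGG_measurable δ ξ κ₂ κ₃)).2 (ae_of_all _ key)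
    _ ≤ ∫ η : Fin 3 → ℝ, K * |ξ| ^ (3 * m - 1) * ((1 + |η 0| + |η 1| + |η 2|) * ‖b η‖) :=
        setIntegral_le_integral hgint (ae_of_all _ hgnn)
    _ = K * |ξ| ^ (3 * m - 1) * I := by rw [hIdef, integral_const_mul]
    _ ≤ K * (I + 1) * |ξ| ^ (3 * m - 1) := by nlinarith [mul_nonneg hK.le hR.le]
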